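/- Let G act 1-acylindrically on a tree T, let γ ∈ G be hyperbolic with axis L, and let u be a vertex of T not on L. If the geodesic from u to L contains an edge f (other than a fixed chosen edge e whose stabilizer is A's edge group), then no nontrivial power of γ fixes f, and no nontrivial element of the stabilizer of u fixes f once d(u, L) ≥ 1 and the action is 1-acylindrical; consequently A = Stab(u) and ⟨γ⟩ generate the free product A * ⟨γ⟩ in G. -/

import Mathlib

open SimpleGraph Walk Pointwise

section PingPongAux

variable {V : Type*} {T : SimpleGraph V}

private lemma pp_path_unique (hT : T.IsTree) {x y : V} {q q' : T.Walk x y}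
    (h : q.IsPath) (h' : q'.IsPath) : q = q' := by
  classical
  obtain ⟨r, -, hr⟩ := hT.existsUnique_path x y
  rw [hr q h, hr q' h']

private lemma pp_exists_path (hT : T.IsTree) (x y : V) : ∃ q : T.Walk x y, q.IsPath :=
  (hT.existsUnique_path x y).exists

private lemma pp_dist_eq_length (hT : T.IsTree) {x y : V} {q : T.Walk x y} (h : q.IsPath) :
    T.dist x y = q.length := by
  classical
  obtain ⟨r, hr⟩ := hT.isConnected.exists_walk_length_eq_dist x y
  have h1 : q = r.bypass := pp_path_unique hT h r.bypass_isPath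
  have h2 : q.length ≤ T.dist x y := by
    rw [h1, ← hr]; exact r.length_bypass_le
  exact le_antisymm (SimpleGraph.dist_le q) h2

private lemma pp_list_fix {α : Type*} (f : α → α) :
    ∀ (l : List α), l.map f = l → ∀ z ∈ l, f z = z := by
  intro l
  induction l with
  | nil => simp
  | cons a l ih =>
    intro h z hz
    rw [List.map_cons, List.cons.injEq] at h
    rw [List.mem_cons] at hz
    rcases hz with rfl | hz
    · exact h.1
    · exact ih h.2 z hz

variable {G : Type*} [Group G] [MulAction G V]

/-- The graph homomorphism given by the action of `g`. -/
private def pp_ghom (T : SimpleGraph V)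
    (hact : ∀ (g : G) (x y : V), T.Adj x y → T.Adj (g • x) (g • y)) (g : G) : T →g T where
  toFun := fun x => g • x
  map_rel' := fun {a b} h => hact g a b h

private lemma pp_ghom_inj (T : SimpleGraph V)
    (hact : ∀ (g : G) (x y : V), T.Adj x y → T.Adj (g • x) (g • y)) (g : G) :
    Function.Injective (pp_ghom T hact g) := fun a b h =>
  MulAction.injective g h

private lemma pp_dist_smul (hT : T.IsTree)
    (hact : ∀ (g : G) (x y : V), T.Adj x y → T.Adj (g • x) (g • y)) (g : G) (x y : V) :
    T.dist (g • x) (g • y) = T.dist x y := by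
  have key : ∀ (g : G) (x y : V), T.dist (g • x) (g • y) ≤ T.dist x y := by
    intro g x y
    obtain ⟨r, hr⟩ := hT.isConnected.exists_walk_length_eq_dist x y
    have := SimpleGraph.dist_le (r.map (pp_ghom T hact g))
    rwa [Walk.length_map, hr] at this
  refine le_antisymm (key g x y) ?_
  have := key g⁻¹ (g • x) (g • y)
  simpa using this

/-- Existence of a path between points of the axis staying on the axis. -/
private lemma pp_exists_line_path (hT : T.IsTree) (c : ℤ → V)
    (hgeo : ∀ m n : ℤ, T.dist (c m) (c n) = (m - n).natAbs) (m n : ℤ) :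
    ∃ q : T.Walk (c m) (c n), q.IsPath ∧ ∀ z ∈ q.support, z ∈ Set.range c := by
  have hcinj : Function.Injective c := by
    intro a b hab
    have h := hgeo a b
    rw [hab, SimpleGraph.dist_self] at h
    omega
  have hadj : ∀ i : ℤ, T.Adj (c i) (c (i + 1)) := by
    intro i
    rw [← SimpleGraph.dist_eq_one_iff_adj, hgeo]
    simp
  have step : ∀ (k : ℕ) (m : ℤ), ∃ q : T.Walk (c m) (c (m + k)),
      q.IsPath ∧ ∀ z ∈ q.support, ∃ j : ℤ, m ≤ j ∧ j ≤ m + k ∧ z = c j := by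
    intro k
    induction k with
    | zero =>
      intro m
      refine ⟨Walk.nil.copy rfl (by norm_num), by simp, ?_⟩
      intro z hz
      simp only [Walk.support_copy, Walk.support_nil, List.mem_singleton] at hz
      exact ⟨m, le_refl _, by omega, hz⟩
    | succ k ih =>
      intro m
      obtain ⟨q, hq, hsup⟩ := ih (m + 1)
      refine ⟨(Walk.cons (hadj m) q).copy rfl (by congr 1; push_cast; ring), ?_, ?_⟩
      · rw [Walk.isPath_copy, Walk.cons_isPath_iff]
        refine ⟨hq, fun hmem => ?_⟩
        obtain ⟨j, hj1, hj2, hj3⟩ := hsup _ hmem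
        have := hcinj hj3
        omega
      · intro z hz
        rw [Walk.support_copy, Walk.support_cons, List.mem_cons] at hz
        rcases hz with rfl | hz
        · exact ⟨m, le_refl _, by omega, rfl⟩
        · obtain ⟨j, hj1, hj2, hj3⟩ := hsup _ hz
          exact ⟨j, by omega, by push_cast; omega, hj3⟩
  rcases le_total m n with hmn | hmn
  · obtain ⟨q, hq, hsup⟩ := step (n - m).toNat m
    have hcast : c (m + ((n - m).toNat : ℤ)) = c n := by congr 1; omega
    refine ⟨q.copy rfl hcast, by rwa [Walk.isPath_copy], ?_⟩
    intro z hz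
    rw [Walk.support_copy] at hz
    obtain ⟨j, -, -, hj⟩ := hsup z hz
    exact ⟨j, hj.symm⟩
  · obtain ⟨q, hq, hsup⟩ := step (m - n).toNat n
    have hcast : c (n + ((m - n).toNat : ℤ)) = c m := by congr 1; omega
    refine ⟨(q.copy rfl hcast).reverse, by rw [Walk.isPath_reverse_iff, Walk.isPath_copy]; exact hq, ?_⟩
    intro z hz
    rw [Walk.support_reverse, List.mem_reverse, Walk.support_copy] at hz
    obtain ⟨j, -, -, hj⟩ := hsup z hz
    exact ⟨j, hj.symm⟩

end PingPongAux



/-- **Ping-pong step in the proof of Theorem 4.1.**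
`G` acts `1`-acylindrically on a tree `T`; `γ` is hyperbolic with axis `L` (the image
of the bi-infinite geodesic `c`, translated by `γ` through `d > 0`); `u` is a vertex
not on `L`; `p` is the geodesic from `u` to `L` (meeting `L` only at its endpoint `w`),
of length at least `2`, whose last edge is `f`, with `f` distinct from the chosen edge
`e`.  Then no nontrivial power of `γ` fixes `f`, no nontrivial element of
`A = Stab(u)` fixes `f`, and `A` and `⟨γ⟩` generate their free product `A * ⟨γ⟩` in
`G` (the canonical map `A * ⟨γ⟩ → G` is injective). -/
theorem ping_pong_step {V G : Type*} [Group G] [MulAction G V]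
    (T : SimpleGraph V) (hT : T.IsTree)
    (hact : ∀ (g : G) (x y : V), T.Adj x y → T.Adj (g • x) (g • y))
    (hacyl : ∀ (g : G) (x y : V) (q : T.Walk x y), q.IsPath → 1 < q.length →
      (∀ z ∈ q.support, g • z = z) → g = 1)
    (γ : G) (c : ℤ → V)
    (hgeo : ∀ m n : ℤ, T.dist (c m) (c n) = (m - n).natAbs)
    (d : ℤ) (hd : 0 < d) (htrans : ∀ n : ℤ, γ • c n = c (n + d))
    (u : V) (hu : u ∉ Set.range c)
    {w : V} (hw : w ∈ Set.range c)
    (p : T.Walk u w) (hp : p.IsPath) (hlen : 2 ≤ p.length)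
    (hnear : ∀ x ∈ p.support, x ≠ w → x ∉ Set.range c)
    (e f : Sym2 V) (he : e ∈ T.edgeSet)
    (hflast : p.edges.getLast? = some f) (hfe : f ≠ e) :
    (∀ k : ℤ, k ≠ 0 → ∃ x ∈ f, γ ^ k • x ≠ x) ∧
    (∀ g ∈ MulAction.stabilizer G u, g ≠ 1 → ∃ x ∈ f, g • x ≠ x) ∧
    Function.Injective
      (Monoid.Coprod.lift (MulAction.stabilizer G u).subtype
        (Subgroup.zpowers γ).subtype) := by
  classical
  obtain ⟨n₀, hn₀⟩ := hw
  -- basic consequences about c and γ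
  have hcinj : Function.Injective c := by
    intro a b hab
    have h := hgeo a b
    rw [hab, SimpleGraph.dist_self] at h
    omega
  have hpow : ∀ (k : ℤ) (m : ℤ), γ ^ k • c m = c (m + k * d) := by
    have hN : ∀ (n : ℕ) (m : ℤ), γ ^ n • c m = c (m + n * d) := by
      intro n
      induction n with
      | zero => intro m; simp
      | succ n ih =>
        intro m
        have : γ ^ (n + 1 : ℕ) • c m = γ • (γ ^ n • c m) := by
          rw [pow_succ']; exact mul_smul γ (γ ^ n) (c m)
        rw [this, ih, htrans]
        congr 1
        push_cast; ring
    intro k m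
    rcases k with n | n
    · simpa using hN n m
    · have h1 : γ ^ ((n + 1 : ℕ) : ℤ) • c (m - (n + 1 : ℕ) * d) = c m := by
        rw [zpow_natCast, hN]
        congr 1; push_cast; ring
      have h2 : γ ^ (Int.negSucc n) • c m
          = γ ^ (Int.negSucc n) • (γ ^ ((n + 1 : ℕ) : ℤ) • c (m - (n + 1 : ℕ) * d)) := by
        rw [h1]
      rw [h2, smul_smul, ← zpow_add]
      have : Int.negSucc n + ((n + 1 : ℕ) : ℤ) = 0 := by
        rw [Int.negSucc_eq]; push_cast; ring
      rw [this, zpow_zero, one_smul]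
      congr 1
      rw [Int.negSucc_eq]; push_cast; ring
  have hone : ∀ k : ℤ, k ≠ 0 → γ ^ k • w ≠ w := by
    intro k hk heq
    rw [← hn₀, hpow] at heq
    have h := hcinj heq
    have hkd : k * d = 0 := by omega
    rcases mul_eq_zero.1 hkd with h' | h' <;> omega
  -- decompose p into q plus the last edge
  cases p with
  | nil => simp at hlen
  | cons hadj₀ p' =>
  obtain ⟨v, q, hvw, hconcat⟩ := Walk.exists_cons_eq_concat hadj₀ p'
  rw [hconcat] at hp hlen hnear hflast
  clear hconcat hadj₀ p'
  have hsupP : (q.concat hvw).support = q.support ++ [w] := by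
    rw [Walk.support_concat]
  have hq : q.IsPath := by
    rw [Walk.concat_eq_append] at hp
    exact hp.of_append_left
  have hwq : w ∉ q.support := by
    have h := hp
    rw [Walk.isPath_def, hsupP, List.nodup_append'] at h
    intro hmem
    exact h.2.2 hmem (List.mem_singleton_self w)
  have hf : f = s(v, w) := by
    rw [Walk.edges_concat, List.concat_eq_append, List.getLast?_concat] at hflast
    exact (Option.some.inj hflast).symm
  have hwf : w ∈ f := by rw [hf]; exact Sym2.mem_mk_right v w
  have hvq : v ∈ q.support := Walk.end_mem_support q
  have hvp : v ∈ (q.concat hvw).support := by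
    rw [hsupP]; exact List.mem_append_left _ hvq
  have hvne : v ≠ w := hvw.ne
  have hvL : v ∉ Set.range c := hnear v hvp hvne
  have hdistuw : T.dist u w = (q.concat hvw).length := pp_dist_eq_length hT hp
  have huw : u ≠ w := by
    intro h
    have h0 : T.dist u w = 0 := by rw [h]; exact SimpleGraph.dist_self
    omega
  -- fixing u and w forces triviality
  have hfixfix : ∀ g : G, g • u = u → g • w = w → g = 1 := by
    intro g h1 h2
    have hWp : ((q.concat hvw).map (pp_ghom T hact g)).IsPath :=
      Walk.map_isPath_of_injective (pp_ghom_inj T hact g) hp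
    have hWeq : ((q.concat hvw).map (pp_ghom T hact g)).copy h1 h2 = q.concat hvw :=
      pp_path_unique hT ((Walk.isPath_copy _ _ _).mpr hWp) hp
    have hsup : (q.concat hvw).support.map (fun z => g • z) = (q.concat hvw).support := by
      have := (Walk.support_copy _ _ _).symm.trans (congrArg Walk.support hWeq)
      rwa [Walk.support_map] at this
    refine hacyl g u w (q.concat hvw) hp ?_ (pp_list_fix _ _ hsup)
    rw [Walk.length_concat]
    rw [Walk.length_concat] at hlen
    omega
  refine ⟨fun k hk => ⟨w, hwf, hone k hk⟩,
    fun g hg hgne => ⟨w, hwf, fun hgw => hgne (hfixfix g (MulAction.mem_stabilizer_iff.1 hg) hgw)⟩,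
    ?_⟩
  -- ping-pong sets
  set XA : Set V := {z | ∀ r : T.Walk z w, r.IsPath → v ∈ r.support} with hXAdef
  set XG : Set V := {z | ∀ r : T.Walk z v, r.IsPath → w ∈ r.support} with hXGdef
  have hmemXA : ∀ z, z ∈ XA ↔ ∀ r : T.Walk z w, r.IsPath → v ∈ r.support := by
    intro z; rw [hXAdef]; exact Iff.rfl
  have hmemXG : ∀ z, z ∈ XG ↔ ∀ r : T.Walk z v, r.IsPath → w ∈ r.support := by
    intro z; rw [hXGdef]; exact Iff.rfl
  -- totality
  have htoXA : ∀ z, z ∉ XG → z ∈ XA := by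
    intro z hz
    rw [hmemXG] at hz
    push_neg at hz
    obtain ⟨r0, hr0, hwr0⟩ := hz
    rw [hmemXA]
    intro r hr
    have hW : (r0.concat hvw).IsPath := by
      rw [Walk.isPath_def, Walk.support_concat, List.nodup_append']
      refine ⟨hr0.support_nodup, List.nodup_singleton w, ?_⟩
      intro t ht ht'
      rw [List.mem_singleton] at ht'
      subst ht'
      exact hwr0 ht
    rw [pp_path_unique hT hr hW, Walk.support_concat]
    exact List.mem_append_left _ (Walk.end_mem_support r0)
  have htoXG : ∀ z, z ∉ XA → z ∈ XG := by
    intro z hz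
    rw [hmemXA] at hz
    push_neg at hz
    obtain ⟨r0, hr0, hvr0⟩ := hz
    rw [hmemXG]
    intro r hr
    have hW : (r0.concat hvw.symm).IsPath := by
      rw [Walk.isPath_def, Walk.support_concat, List.nodup_append']
      refine ⟨hr0.support_nodup, List.nodup_singleton v, ?_⟩
      intro t ht ht'
      rw [List.mem_singleton] at ht'
      subst ht'
      exact hvr0 ht
    rw [pp_path_unique hT hr hW, Walk.support_concat]
    exact List.mem_append_left _ (Walk.end_mem_support r0)
  -- splitting
  have hsplitA : ∀ z, z ∈ XA → ∀ r : T.Walk z w, r.IsPath →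
      ∃ r1 : T.Walk z v, r1.IsPath ∧ r = r1.concat hvw ∧ w ∉ r1.support := by
    intro z hz r hr
    have hv : v ∈ r.support := (hmemXA z).1 hz r hr
    have hdrop : r.dropUntil v hv = Walk.cons hvw Walk.nil := by
      refine pp_path_unique hT (hr.dropUntil hv) ?_
      rw [Walk.cons_isPath_iff]
      exact ⟨Walk.IsPath.nil, by simp [hvne]⟩
    have hspec : (r.takeUntil v hv).append (r.dropUntil v hv) = r := r.take_spec hv
    refine ⟨r.takeUntil v hv, hr.takeUntil hv, ?_, ?_⟩
    · rw [Walk.concat_eq_append, ← hdrop, hspec]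
    · intro hmem
      have h2 := hr
      rw [← hspec, hdrop] at h2
      rw [Walk.isPath_def, Walk.support_append, List.nodup_append'] at h2
      exact h2.2.2 hmem (by simp)
  have hsplitG : ∀ z, z ∈ XG → ∀ r : T.Walk z v, r.IsPath →
      ∃ r1 : T.Walk z w, r1.IsPath ∧ r = r1.concat hvw.symm ∧ v ∉ r1.support := by
    intro z hz r hr
    have hv : w ∈ r.support := (hmemXG z).1 hz r hr
    have hdrop : r.dropUntil w hv = Walk.cons hvw.symm Walk.nil := by
      refine pp_path_unique hT (hr.dropUntil hv) ?_
      rw [Walk.cons_isPath_iff]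
      exact ⟨Walk.IsPath.nil, by simp [Ne.symm hvne]⟩
    have hspec : (r.takeUntil w hv).append (r.dropUntil w hv) = r := r.take_spec hv
    refine ⟨r.takeUntil w hv, hr.takeUntil hv, ?_, ?_⟩
    · rw [Walk.concat_eq_append, ← hdrop, hspec]
    · intro hmem
      have h2 := hr
      rw [← hspec, hdrop] at h2
      rw [Walk.isPath_def, Walk.support_append, List.nodup_append'] at h2
      exact h2.2.2 hmem (by simp)
  -- distance relations
  have hdistA : ∀ z ∈ XA, T.dist z w = T.dist z v + 1 := by
    intro z hz
    obtain ⟨r, hr⟩ := pp_exists_path hT z w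
    obtain ⟨r1, hr1, heq, -⟩ := hsplitA z hz r hr
    rw [pp_dist_eq_length hT hr, pp_dist_eq_length hT hr1, heq, Walk.length_concat]
  have hdistG : ∀ z ∈ XG, T.dist z v = T.dist z w + 1 := by
    intro z hz
    obtain ⟨r, hr⟩ := pp_exists_path hT z v
    obtain ⟨r1, hr1, heq, -⟩ := hsplitG z hz r hr
    rw [pp_dist_eq_length hT hr, pp_dist_eq_length hT hr1, heq, Walk.length_concat]
  have hdisj0 : ∀ z, z ∈ XA → z ∉ XG := by
    intro z h1 h2
    have e1 := hdistA z h1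
    have e2 := hdistG z h2
    omega
  -- paths from the u-side avoid the axis
  have hnoL : ∀ z ∈ XA, ∀ r1 : T.Walk z v, r1.IsPath → ∀ y ∈ r1.support, y ∉ Set.range c := by
    intro z hz r1 hr1 y hy hyL
    obtain ⟨r, hr⟩ := pp_exists_path hT z w
    obtain ⟨r1', hr1', heq, hwr1⟩ := hsplitA z hz r hr
    have hrr : r1 = r1' := pp_path_unique hT hr1 hr1'
    have hy' : y ∈ r1'.support := hrr ▸ hy
    have hW1path : ((r1'.dropUntil y hy').concat hvw).IsPath := by
      rw [Walk.isPath_def, Walk.support_concat, List.nodup_append']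
      refine ⟨(hr1'.dropUntil hy').support_nodup, List.nodup_singleton w, ?_⟩
      intro t ht ht'
      rw [List.mem_singleton] at ht'
      subst ht'
      exact hwr1 (Walk.support_dropUntil_subset r1' hy' ht)
    obtain ⟨my, hmy⟩ := hyL
    obtain ⟨q2, hq2, hq2L⟩ := pp_exists_line_path hT c hgeo my n₀
    have hW2path : (q2.copy hmy hn₀).IsPath := by rwa [Walk.isPath_copy]
    have hWeq := pp_path_unique hT hW1path hW2path
    have hvmem : v ∈ ((r1'.dropUntil y hy').concat hvw).support := by
      rw [Walk.support_concat]
      exact List.mem_append_left _ (Walk.end_mem_support _)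
    rw [hWeq, Walk.support_copy] at hvmem
    exact hvL (hq2L v hvmem)
  -- distance from the u-side to points of the axis
  have hXAc : ∀ z ∈ XA, ∀ m : ℤ, T.dist z (c m) = T.dist z v + 1 + (n₀ - m).natAbs := by
    intro z hz m
    obtain ⟨r, hr⟩ := pp_exists_path hT z w
    obtain ⟨r1, hr1, heq, hwr1⟩ := hsplitA z hz r hr
    obtain ⟨q2, hq2, hq2L⟩ := pp_exists_line_path hT c hgeo n₀ m
    have hLwpath : (q2.copy hn₀ rfl).IsPath := by rwa [Walk.isPath_copy]
    have hrsup : r.support = r1.support ++ [w] := by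
      rw [heq, Walk.support_concat]
    have hbig : (r.append (q2.copy hn₀ rfl)).IsPath := by
      rw [Walk.isPath_def, Walk.support_append, List.nodup_append']
      refine ⟨hr.support_nodup, (List.tail_sublist _).nodup hLwpath.support_nodup, ?_⟩
      intro t ht ht'
      have htL : t ∈ Set.range c := by
        have hmem : t ∈ (q2.copy hn₀ rfl).support := List.mem_of_mem_tail ht'
        rw [Walk.support_copy] at hmem
        exact hq2L t hmem
      have htw : t ≠ w := by
        intro hh
        subst hh
        have hnd := hLwpath.support_nodup
        rw [Walk.support_eq_cons] at hnd
        exact (List.nodup_cons.1 hnd).1 ht'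
      rw [hrsup] at ht
      rcases List.mem_append.1 ht with h1 | h1
      · exact hnoL z hz r1 hr1 t h1 htL
      · exact htw (List.mem_singleton.1 h1)
    have hlen1 : T.dist z (c m) = r.length + (q2.copy hn₀ rfl).length := by
      rw [pp_dist_eq_length hT hbig, Walk.length_append]
    have e1 : (q2.copy hn₀ rfl).length = (n₀ - m).natAbs := by
      rw [Walk.length_copy, ← pp_dist_eq_length hT hq2, hgeo]
    have e2 : T.dist z w = r.length := pp_dist_eq_length hT hr
    have e3 := hdistA z hz
    omega
  -- nontrivial powers of γ map the u-side into the axis side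
  have hB : ∀ k : ℤ, k ≠ 0 → ∀ x ∈ XA, γ ^ k • x ∈ XG := by
    intro k hk x hx
    by_contra hc
    have hx2 : γ ^ k • x ∈ XA := htoXA _ hc
    have E1 := hXAc _ hx2 n₀
    have E2 := hXAc _ hx2 (n₀ + k * d)
    have F1 : T.dist (γ ^ k • x) (c n₀) = T.dist x v + 1 + (k * d).natAbs := by
      have hc1 : γ ^ k • c (n₀ - k * d) = c n₀ := by rw [hpow]; congr 1; ring
      calc T.dist (γ ^ k • x) (c n₀)
          = T.dist (γ ^ k • x) (γ ^ k • c (n₀ - k * d)) := by rw [hc1]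
        _ = T.dist x (c (n₀ - k * d)) := pp_dist_smul hT hact _ _ _
        _ = T.dist x v + 1 + (n₀ - (n₀ - k * d)).natAbs := hXAc _ hx _
        _ = T.dist x v + 1 + (k * d).natAbs := by
            rw [show n₀ - (n₀ - k * d) = k * d by ring]
    have F2 : T.dist (γ ^ k • x) (c (n₀ + k * d)) = T.dist x v + 1 := by
      calc T.dist (γ ^ k • x) (c (n₀ + k * d))
          = T.dist (γ ^ k • x) (γ ^ k • c n₀) := by rw [hpow]
        _ = T.dist x (c n₀) := pp_dist_smul hT hact _ _ _
        _ = T.dist x v + 1 + (n₀ - n₀).natAbs := hXAc _ hx _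
        _ = T.dist x v + 1 := by simp
    rw [show n₀ - (n₀ + k * d) = -(k * d) by ring, Int.natAbs_neg] at E2
    rw [show (n₀ - n₀ : ℤ) = 0 by ring] at E1
    simp only [Int.natAbs_zero, add_zero] at E1
    have hkd0 : (k * d).natAbs = 0 := by omega
    have hkd : k * d = 0 := Int.natAbs_eq_zero.1 hkd0
    rcases mul_eq_zero.1 hkd with h' | h' <;> omega
  -- paths from the axis side to u
  have hGu : ∀ z ∈ XG, ∃ r1 : T.Walk z w, r1.IsPath ∧
      (r1.append (q.concat hvw).reverse).IsPath := by
    intro z hz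
    obtain ⟨rzv, hrzv⟩ := pp_exists_path hT z v
    obtain ⟨r1, hr1, heq, hvr1⟩ := hsplitG z hz rzv hrzv
    refine ⟨r1, hr1, ?_⟩
    rw [Walk.isPath_def, Walk.support_append, List.nodup_append']
    refine ⟨hr1.support_nodup, (List.tail_sublist _).nodup hp.reverse.support_nodup, ?_⟩
    intro t ht ht'
    have htP : t ∈ q.support := by
      have h1 : (q.concat hvw).reverse.support = w :: q.support.reverse := by
        rw [Walk.support_reverse, hsupP, List.reverse_append]
        simp
      rw [h1, List.tail_cons] at ht'
      exact List.mem_reverse.1 ht'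
    have hW1path : ((q.dropUntil t htP).concat hvw).IsPath := by
      rw [Walk.isPath_def, Walk.support_concat, List.nodup_append']
      refine ⟨(hq.dropUntil htP).support_nodup, List.nodup_singleton w, ?_⟩
      intro s hs hs'
      rw [List.mem_singleton] at hs'
      subst hs'
      exact hwq (Walk.support_dropUntil_subset q htP hs)
    have hWeq := pp_path_unique hT hW1path (hr1.dropUntil ht)
    have hvmem : v ∈ ((q.dropUntil t htP).concat hvw).support := by
      rw [Walk.support_concat]
      exact List.mem_append_left _ (Walk.end_mem_support _)
    rw [hWeq] at hvmem
    exact hvr1 (Walk.support_dropUntil_subset r1 ht hvmem)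
  have hGdistu : ∀ z ∈ XG, T.dist z u = T.dist z w + (q.concat hvw).length := by
    intro z hz
    obtain ⟨r1, hr1, hbig⟩ := hGu z hz
    have h1 : T.dist z u = (r1.append (q.concat hvw).reverse).length :=
      pp_dist_eq_length hT hbig
    rw [Walk.length_append, Walk.length_reverse] at h1
    rw [h1, pp_dist_eq_length hT hr1]
  -- nontrivial stabilizer elements map the axis side into the u-side
  have hA : ∀ a : G, a • u = u → a ≠ 1 → ∀ x ∈ XG, a • x ∈ XA := by
    intro a hau hane x hx
    by_contra hc
    have hx2 : a • x ∈ XG := htoXG _ hc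
    obtain ⟨r1, hr1, hP1⟩ := hGu x hx
    obtain ⟨r2, hr2, hP2⟩ := hGu _ hx2
    have hlen12 : r1.length = r2.length := by
      have h1 := hGdistu x hx
      have h2 := hGdistu _ hx2
      have h3 : T.dist (a • x) u = T.dist x u := by
        conv_lhs => rw [← hau]
        exact pp_dist_smul hT hact a x u
      have e1 : T.dist x w = r1.length := pp_dist_eq_length hT hr1
      have e2 : T.dist (a • x) w = r2.length := pp_dist_eq_length hT hr2
      omega
    have hmap : ((r1.append (q.concat hvw).reverse).map (pp_ghom T hact a)).copy rfl hau
        = r2.append (q.concat hvw).reverse := by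
      refine pp_path_unique hT ?_ hP2
      refine (Walk.isPath_copy _ _ _).mpr ?_
      exact Walk.map_isPath_of_injective (pp_ghom_inj T hact a) hP1
    have hsup := (Walk.support_copy _ _ _).symm.trans
      ((congrArg Walk.support hmap).trans (Walk.support_append _ _))
    rw [Walk.support_map, Walk.support_append,
      List.map_append] at hsup
    have hlensup : (r1.support.map (⇑(pp_ghom T hact a))).length = r2.support.length := by
      rw [List.length_map, Walk.length_support, Walk.length_support, hlen12]
    obtain ⟨hfst, -⟩ := List.append_inj hsup hlensup
    have hne1 : r1.support.map (⇑(pp_ghom T hact a)) ≠ [] := by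
      simp [Walk.support_ne_nil]
    have hne2 : r2.support ≠ [] := Walk.support_ne_nil _
    have h4 : (r1.support.map (⇑(pp_ghom T hact a))).getLast? = r2.support.getLast? := by
      exact congrArg List.getLast? hfst
    rw [List.getLast?_eq_getLast hne1, List.getLast?_eq_getLast hne2,
      List.getLast_map] at h4
    have h5 : a • w = w := by
      have := Option.some.inj h4
      rwa [Walk.getLast_support, Walk.getLast_support] at this
    exact hane (hfixfix a hau h5)
  -- assemble the ping-pong data
  set Sfam : Bool → Subgroup G :=
    (fun b => cond b (Subgroup.zpowers γ) (MulAction.stabilizer G u)) with hSfam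
  set Xfam : Bool → Set V := (fun b => cond b XG XA) with hXfam
  have hnotfin : ¬IsOfFinOrder γ := by
    intro hfin
    obtain ⟨n, hn, h1⟩ := isOfFinOrder_iff_pow_eq_one.1 hfin
    refine hone (n : ℤ) (by exact_mod_cast hn.ne') ?_
    rw [zpow_natCast, h1, one_smul]
  have hinfZ : Infinite ↥(Subgroup.zpowers γ) :=
    Set.infinite_coe_iff.2 (infinite_zpowers.2 hnotfin)
  have hcard : 3 ≤ Cardinal.mk Bool ∨ ∃ i, 3 ≤ Cardinal.mk ↥(Sfam i) := by
    refine Or.inr ⟨true, ?_⟩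
    calc (3 : Cardinal) ≤ Cardinal.aleph0 := by exact_mod_cast (Cardinal.nat_lt_aleph0 3).le
      _ ≤ Cardinal.mk ↥(Subgroup.zpowers γ) := Cardinal.aleph0_le_mk _
  have hXnonempty : ∀ i, (Xfam i).Nonempty := by
    intro i
    cases i
    · exact ⟨v, (hmemXA v).2 (fun r hr => Walk.start_mem_support r)⟩
    · exact ⟨w, (hmemXG w).2 (fun r hr => Walk.start_mem_support r)⟩
  have hXdisj : Pairwise (Function.onFun Disjoint Xfam) := by
    have hd1 : Disjoint XA XG := Set.disjoint_left.2 (fun {z} h1 h2 => hdisj0 z h1 h2)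
    intro i j hij
    cases i <;> cases j
    · exact absurd rfl hij
    · exact hd1
    · exact hd1.symm
    · exact absurd rfl hij
  have hpp : Pairwise fun i j => ∀ h : ↥(Sfam i), h ≠ 1 →
      (Sfam i).subtype h • Xfam j ⊆ Xfam i := by
    intro i j hij
    cases i <;> cases j
    · exact absurd rfl hij
    · intro h hne
      rintro z ⟨y, hy, rfl⟩
      have hcoe : (h : G) • u = u := MulAction.mem_stabilizer_iff.1 h.2
      have hne' : (h : G) ≠ 1 := fun h1 => hne (OneMemClass.coe_eq_one.1 h1)
      exact hA _ hcoe hne' y hy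
    · intro h hne
      rintro z ⟨y, hy, rfl⟩
      obtain ⟨k, hk⟩ := Subgroup.mem_zpowers_iff.1 h.2
      have hk0 : k ≠ 0 := by
        rintro rfl
        exact hne (OneMemClass.coe_eq_one.1 (by rw [← hk, zpow_zero]))
      have hmem := hB k hk0 y hy
      show (Sfam true).subtype h • y ∈ XG
      have : ((Sfam true).subtype h : G) = γ ^ k := hk.symm
      rw [this]
      exact hmem
    · exact absurd rfl hij
  have hinj : Function.Injective (Monoid.CoprodI.lift (fun b => (Sfam b).subtype)) :=
    Monoid.CoprodI.lift_injective_of_ping_pong (fun b => (Sfam b).subtype) hcard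
      Xfam hXnonempty hXdisj hpp
  -- transfer injectivity through the equivalence with the binary coproduct
  set φ : Monoid.Coprod ↥(MulAction.stabilizer G u) ↥(Subgroup.zpowers γ) →*
      Monoid.CoprodI (fun b => ↥(Sfam b)) :=
    Monoid.Coprod.lift (Monoid.CoprodI.of (M := fun b => ↥(Sfam b)) (i := false)) (Monoid.CoprodI.of (M := fun b => ↥(Sfam b)) (i := true))
      with hφ
  set ψ : Monoid.CoprodI (fun b => ↥(Sfam b)) →*
      Monoid.Coprod ↥(MulAction.stabilizer G u) ↥(Subgroup.zpowers γ) :=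
    Monoid.CoprodI.lift (fun b => Bool.rec
      (motive := fun b => ↥(Sfam b) →*
        Monoid.Coprod ↥(MulAction.stabilizer G u) ↥(Subgroup.zpowers γ))
      Monoid.Coprod.inl Monoid.Coprod.inr b) with hψ
  have hψφ : ∀ x, ψ (φ x) = x := by
    have hcomp : ψ.comp φ = MonoidHom.id _ := by
      apply Monoid.Coprod.hom_ext
      · ext a
        show ψ (φ (Monoid.Coprod.inl a)) = Monoid.Coprod.inl a
        rw [hφ, Monoid.Coprod.lift_apply_inl, hψ]
        exact Monoid.CoprodI.lift_of (M := fun b => ↥(Sfam b)) (i := false) _ a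
      · ext a
        show ψ (φ (Monoid.Coprod.inr a)) = Monoid.Coprod.inr a
        rw [hφ, Monoid.Coprod.lift_apply_inr, hψ]
        exact Monoid.CoprodI.lift_of (M := fun b => ↥(Sfam b)) (i := true) _ a
    intro x
    exact DFunLike.congr_fun hcomp x
  have hφinj : Function.Injective φ := fun x y hxy => by
    rw [← hψφ x, ← hψφ y, hxy]
  have hlift : Monoid.Coprod.lift (MulAction.stabilizer G u).subtype
      (Subgroup.zpowers γ).subtype
      = (Monoid.CoprodI.lift (fun b => (Sfam b).subtype)).comp φ := by
    apply Monoid.Coprod.hom_ext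
    · ext a
      show (MulAction.stabilizer G u).subtype a
        = (Monoid.CoprodI.lift (fun b => (Sfam b).subtype)) (φ (Monoid.Coprod.inl a))
      rw [hφ, Monoid.Coprod.lift_apply_inl]
      exact (Monoid.CoprodI.lift_of (M := fun b => ↥(Sfam b)) (i := false) (fun b => (Sfam b).subtype) a).symm
    · ext a
      show (Subgroup.zpowers γ).subtype a
        = (Monoid.CoprodI.lift (fun b => (Sfam b).subtype)) (φ (Monoid.Coprod.inr a))
      rw [hφ, Monoid.Coprod.lift_apply_inr]
      exact (Monoid.CoprodI.lift_of (M := fun b => ↥(Sfam b)) (i := true) (fun b => (Sfam b).subtype) a).symm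
  rw [hlift, MonoidHom.coe_comp]
  exact hinj.comp hφinj
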